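/- Let p be an odd prime, F = GF(p), R = {(a, a^2) : a ∈ F} ⊆ F × F. Define a graph Γ₀ on vertex set F × F where distinct vertices (a,b) and (c,d) are adjacent iff (a+c, b+d) ∈ R. Then any two vertices (a,b) and (c,d) with a ≠ c are at distance at most 2 in Γ₀. -/

import Mathlib

/-- The graph on `F × F` with distinct vertices `x, y` adjacent iff
`(x.1 + y.1, x.2 + y.2)` lies on the parabola `R = {(a, a²)}`. -/
def parabolaGraph (p : ℕ) : SimpleGraph (ZMod p × ZMod p) where
  Adj x y := x ≠ y ∧ x.2 + y.2 = (x.1 + y.1) ^ 2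
  symm := ⟨fun x y ⟨h1, h2⟩ => ⟨h1.symm, by rw [add_comm y.2, add_comm y.1]; exact h2⟩⟩
  loopless := ⟨fun x ⟨h, _⟩ => h rfl⟩

theorem parabolaGraph_dist_le_two (p : ℕ) (hp : p.Prime) (hodd : Odd p)
    (x y : ZMod p × ZMod p) (h : x.1 ≠ y.1) :
    x = y ∨ (parabolaGraph p).Adj x y ∨
      ∃ z, (parabolaGraph p).Adj x z ∧ (parabolaGraph p).Adj z y := by
  haveI : Fact p.Prime := ⟨hp⟩
  by_cases hxy : x = y
  · exact Or.inl hxy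
  by_cases hadj : x.2 + y.2 = (x.1 + y.1) ^ 2
  · exact Or.inr (Or.inl ⟨hxy, hadj⟩)
  refine Or.inr (Or.inr ?_)
  have hp2 : p ≠ 2 := by rintro rfl; exact (by decide : ¬ Odd 2) hodd
  have h2 : (2 : ZMod p) ≠ 0 := by
    intro h0
    have h0' : ((2 : ℕ) : ZMod p) = 0 := by exact_mod_cast h0
    have := (ZMod.natCast_eq_zero_iff 2 p).mp h0'
    exact hp2 ((Nat.prime_dvd_prime_iff_eq hp Nat.prime_two).mp this)
  have ha : x.1 - y.1 ≠ 0 := sub_ne_zero.mpr h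
  set e : ZMod p := ((x.2 - y.2) / (x.1 - y.1) - x.1 - y.1) / 2 with he
  set f : ZMod p := (x.1 + e) ^ 2 - x.2 with hf
  have hfirst : x.2 + f = (x.1 + e) ^ 2 := by rw [hf]; ring
  have hkey : f + y.2 = (e + y.1) ^ 2 := by
    rw [hf, he]
    field_simp
    ring
  have hzx : (e, f) ≠ x := by
    intro hz
    apply hadj
    have h1 : e = x.1 := congrArg Prod.fst hz
    have h2' : f = x.2 := congrArg Prod.snd hz
    rw [h1, h2'] at hkey
    exact hkey
  have hzy : (e, f) ≠ y := by
    intro hz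
    apply hadj
    have h1 : e = y.1 := congrArg Prod.fst hz
    have h2' : f = y.2 := congrArg Prod.snd hz
    rw [h1, h2'] at hfirst
    exact hfirst
  exact ⟨(e, f), ⟨hzx.symm, hfirst⟩, ⟨hzy, hkey⟩⟩
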